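/- Let H be a separable real Hilbert space and suppose ∫∫ exp(-‖x-y‖²/2) dμ(x) dμ(y) ≥ 0 for every finite signed Borel measure μ on H; i.e., the Gaussian kernel on H is positive definite in the integral sense: for all finite signed measures μ, ∫∫ exp(-‖x-y‖²/2) dμ(x) dμ(y) ≥ 0. -/

import Mathlib

open MeasureTheory Real
open scoped ENNReal NNReal
set_option maxHeartbeats 1600000
set_option linter.unusedSectionVars false

namespace Stmt2Aux

variable {ι : Type*}

lemma cs_summable {u v : ι → ℝ} (hu : ∀ i, 0 ≤ u i) (hv : ∀ i, 0 ≤ v i)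
    (h2u : Summable fun i => u i ^ 2) (h2v : Summable fun i => v i ^ 2) :
    Summable fun i => u i * v i := by
  refine Summable.of_nonneg_of_le (fun i => mul_nonneg (hu i) (hv i)) (fun i => ?_)
    ((h2u.add h2v).mul_left (1/2 : ℝ))
  nlinarith [sq_nonneg (u i - v i)]

lemma cs_tsum_le {u v : ι → ℝ} (hu : ∀ i, 0 ≤ u i) (hv : ∀ i, 0 ≤ v i)
    (h2u : Summable fun i => u i ^ 2) (h2v : Summable fun i => v i ^ 2)
    {A B : ℝ} (hA : 0 ≤ A) (hB : 0 ≤ B)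
    (hAB : ∑' i, u i ^ 2 ≤ A ^ 2) (hBB : ∑' i, v i ^ 2 ≤ B ^ 2) :
    ∑' i, u i * v i ≤ A * B := by
  refine Summable.tsum_le_of_sum_le (cs_summable hu hv h2u h2v) (fun s => ?_)
  have h1 : (∑ i ∈ s, u i * v i) ^ 2 ≤ (∑ i ∈ s, u i ^ 2) * ∑ i ∈ s, v i ^ 2 :=
    Finset.sum_mul_sq_le_sq_mul_sq s u v
  have h2 : (∑ i ∈ s, u i ^ 2) ≤ A ^ 2 :=
    le_trans (Summable.sum_le_tsum s (fun i _ => sq_nonneg _) h2u) hAB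
  have h3 : (∑ i ∈ s, v i ^ 2) ≤ B ^ 2 :=
    le_trans (Summable.sum_le_tsum s (fun i _ => sq_nonneg _) h2v) hBB
  have h4 : 0 ≤ ∑ i ∈ s, u i * v i :=
    Finset.sum_nonneg fun i _ => mul_nonneg (hu i) (hv i)
  have h5 : (∑ i ∈ s, u i * v i) ^ 2 ≤ A ^ 2 * B ^ 2 := by
    refine le_trans h1 (mul_le_mul h2 h3 ?_ (sq_nonneg A))
    exact Finset.sum_nonneg fun i _ => sq_nonneg _
  nlinarith [mul_nonneg hA hB]

lemma tuple_prod_nonneg {c : ι → ℝ} (hc0 : ∀ i, 0 ≤ c i) {n : ℕ} (f : Fin n → ι) :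
    0 ≤ ∏ j, c (f j) := Finset.prod_nonneg fun j _ => hc0 (f j)

lemma summable_tuple_prod' {c : ι → ℝ} (hc : Summable fun i => |c i|) (n : ℕ) :
    Summable (fun f : Fin n → ι => ∏ j, c (f j)) ∧
    Summable (fun f : Fin n → ι => ∏ j, |c (f j)|) ∧
    (∑' f : Fin n → ι, ∏ j, c (f j) = (∑' i, c i) ^ n) ∧
    (∑' f : Fin n → ι, ∏ j, |c (f j)| = (∑' i, |c i|) ^ n) := by
  induction n with
  | zero =>
    have h0 : ∀ (d : ι → ℝ), ∑' f : Fin 0 → ι, ∏ j, d (f j) = 1 := by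
      intro d
      rw [tsum_eq_single (default : Fin 0 → ι)
        (fun b hb => absurd (Subsingleton.elim b default) hb)]
      simp
    exact ⟨Summable.of_finite, Summable.of_finite, by rw [pow_zero]; exact h0 c,
      by rw [pow_zero]; exact h0 (fun i => |c i|)⟩
  | succ n ih =>
    obtain ⟨ihs, ihas, iht, ihat⟩ := ih
    have key : ∀ (d : ι → ℝ) (p : ι × (Fin n → ι)),
        (∏ j : Fin (n+1), d ((Fin.consEquiv fun _ => ι) p j)) = d p.1 * ∏ j, d (p.2 j) := by
      intro d p
      simp only [Fin.consEquiv_apply]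
      rw [Fin.prod_univ_succ]
      simp
    have hnorm1 : Summable fun i => ‖c i‖ := hc.congr fun i => (Real.norm_eq_abs _).symm
    have hnorm1' : Summable fun i => ‖|c i|‖ := by
      refine hc.congr fun i => ?_
      rw [Real.norm_eq_abs, abs_abs]
    have hnorm2 : Summable fun f : Fin n → ι => ‖∏ j, c (f j)‖ := by
      refine ihas.congr fun f => ?_
      rw [Real.norm_eq_abs, Finset.abs_prod]
    have hnorm2' : Summable fun f : Fin n → ι => ‖∏ j, |c (f j)|‖ := by
      refine ihas.congr fun f => ?_
      rw [Real.norm_of_nonneg (tuple_prod_nonneg (fun i => abs_nonneg (c i)) f)]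
    have hsum_prod : Summable fun p : ι × (Fin n → ι) => c p.1 * ∏ j, c (p.2 j) :=
      summable_mul_of_summable_norm (f := fun i => c i)
        (g := fun f : Fin n → ι => ∏ j, c (f j)) hnorm1 hnorm2
    have hsum_prod' : Summable fun p : ι × (Fin n → ι) => |c p.1| * ∏ j, |c (p.2 j)| :=
      summable_mul_of_summable_norm (f := fun i => |c i|)
        (g := fun f : Fin n → ι => ∏ j, |c (f j)|) hnorm1' hnorm2'
    have hsumm : Summable (fun f : Fin (n+1) → ι => ∏ j, c (f j)) :=
      ((Fin.consEquiv fun _ => ι).summable_iff).mp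
        (hsum_prod.congr fun p => (key c p).symm)
    have hsumm' : Summable (fun f : Fin (n+1) → ι => ∏ j, |c (f j)|) :=
      ((Fin.consEquiv fun _ => ι).summable_iff).mp
        (hsum_prod'.congr fun p => (key (fun i => |c i|) p).symm)
    refine ⟨hsumm, hsumm', ?_, ?_⟩
    · calc ∑' f : Fin (n+1) → ι, ∏ j, c (f j)
          = ∑' p : ι × (Fin n → ι), ∏ j : Fin (n+1), c ((Fin.consEquiv fun _ => ι) p j) :=
            ((Fin.consEquiv fun _ => ι).tsum_eq _).symm
        _ = ∑' p : ι × (Fin n → ι), c p.1 * ∏ j, c (p.2 j) := tsum_congr (key c)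
        _ = (∑' i, c i) * ∑' f : Fin n → ι, ∏ j, c (f j) :=
            (tsum_mul_tsum_of_summable_norm (f := fun i => c i)
              (g := fun f : Fin n → ι => ∏ j, c (f j)) hnorm1 hnorm2).symm
        _ = (∑' i, c i) ^ (n + 1) := by rw [iht, pow_succ]; ring
    · calc ∑' f : Fin (n+1) → ι, ∏ j, |c (f j)|
          = ∑' p : ι × (Fin n → ι), ∏ j : Fin (n+1), |c (((Fin.consEquiv fun _ => ι) p j))| :=
            ((Fin.consEquiv fun _ => ι).tsum_eq _).symm
        _ = ∑' p : ι × (Fin n → ι), |c p.1| * ∏ j, |c (p.2 j)| :=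
            tsum_congr (key (fun i => |c i|))
        _ = (∑' i, |c i|) * ∑' f : Fin n → ι, ∏ j, |c (f j)| :=
            (tsum_mul_tsum_of_summable_norm (f := fun i => |c i|)
              (g := fun f : Fin n → ι => ∏ j, |c (f j)|) hnorm1' hnorm2').symm
        _ = (∑' i, |c i|) ^ (n + 1) := by rw [ihat, pow_succ]; ring


abbrev W (ι : Type*) := Σ n : ℕ, Fin n → ι

noncomputable def ca (w : W ι) : ℝ := ((Nat.factorial w.1 : ℕ) : ℝ)⁻¹

lemma ca_nonneg (w : W ι) : 0 ≤ ca w := by unfold ca; positivity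

lemma real_exp_eq_tsum (x : ℝ) : Real.exp x = ∑' n : ℕ, x ^ n / (Nat.factorial n) := by
  rw [Real.exp_eq_exp_ℝ, NormedSpace.exp_eq_tsum_div]

/-- master sigma expansion: signed and abs versions -/
lemma sig_exp {c : ι → ℝ} (hc : Summable fun i => |c i|) :
    Summable (fun w : W ι => ca w * ∏ j, c (w.2 j)) ∧
    Summable (fun w : W ι => ca w * ∏ j, |c (w.2 j)|) ∧
    (∑' w : W ι, ca w * ∏ j, c (w.2 j) = Real.exp (∑' i, c i)) ∧
    (∑' w : W ι, ca w * ∏ j, |c (w.2 j)| = Real.exp (∑' i, |c i|)) := by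
  have hT := summable_tuple_prod' hc
  have hfib : ∀ (d : ι → ℝ) (n : ℕ),
      (fun y : Fin n → ι => (fun w : W ι => ca w * ∏ j, d (w.2 j)) ⟨n, y⟩)
        = fun y : Fin n → ι => ((Nat.factorial n : ℕ) : ℝ)⁻¹ * ∏ j, d (y j) := fun d n => rfl
  have habs : Summable (fun w : W ι => ca w * ∏ j, |c (w.2 j)|) := by
    rw [summable_sigma_of_nonneg
      (fun w => mul_nonneg (ca_nonneg w) (tuple_prod_nonneg (fun i => abs_nonneg _) _))]
    constructor
    · intro n
      rw [hfib (fun i => |c i|) n]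
      exact ((hT n).2.1).mul_left _
    · refine Summable.congr (Real.summable_pow_div_factorial (∑' i, |c i|)) fun n => ?_
      rw [hfib (fun i => |c i|) n, tsum_mul_left, (hT n).2.2.2, div_eq_inv_mul]
  have hsgn : Summable (fun w : W ι => ca w * ∏ j, c (w.2 j)) := by
    rw [← summable_abs_iff]
    refine habs.congr fun w => ?_
    rw [abs_mul, abs_of_nonneg (ca_nonneg w), Finset.abs_prod]
  refine ⟨hsgn, habs, ?_, ?_⟩
  · rw [Summable.tsum_sigma' (γ := fun n => Fin n → ι)
      (f := fun w : W ι => ca w * ∏ j, c (w.2 j))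
      (fun n => by rw [hfib c n]; exact ((hT n).1).mul_left _) hsgn, real_exp_eq_tsum]
    refine tsum_congr fun n => ?_
    rw [show (∑' y : Fin n → ι, (fun w : W ι => ca w * ∏ j, c (w.2 j)) ⟨n, y⟩)
        = ∑' y : Fin n → ι, ((Nat.factorial n : ℕ) : ℝ)⁻¹ * ∏ j, c (y j) from by rw [hfib c n]]
    rw [tsum_mul_left, (hT n).2.2.1, div_eq_inv_mul]
  · rw [Summable.tsum_sigma' (γ := fun n => Fin n → ι)
      (f := fun w : W ι => ca w * ∏ j, |c (w.2 j)|)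
      (fun n => by rw [hfib (fun i => |c i|) n]; exact ((hT n).2.1).mul_left _) habs,
      real_exp_eq_tsum]
    refine tsum_congr fun n => ?_
    rw [show (∑' y : Fin n → ι, (fun w : W ι => ca w * ∏ j, |c (w.2 j)|) ⟨n, y⟩)
        = ∑' y : Fin n → ι, ((Nat.factorial n : ℕ) : ℝ)⁻¹ * ∏ j, |c (y j)| from by
          rw [hfib (fun i => |c i|) n]]
    rw [tsum_mul_left, (hT n).2.2.2, div_eq_inv_mul]


variable {H : Type*} [NormedAddCommGroup H] [InnerProductSpace ℝ H]

noncomputable def psi (b : HilbertBasis ι ℝ H) (w : W ι) (x : H) : ℝ :=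
  Real.exp (-‖x‖ ^ 2 / 2) * ∏ j, (inner ℝ (b (w.2 j)) x : ℝ)

lemma psi_continuous (b : HilbertBasis ι ℝ H) (w : W ι) : Continuous (psi b w) := by
  unfold psi
  exact ((Real.continuous_exp.comp (by fun_prop)).mul
    (continuous_finset_prod _ fun j _ => (innerSL ℝ (b (w.2 j))).continuous))

lemma inner_abs_summable (b : HilbertBasis ι ℝ H) (x y : H) :
    Summable (fun i => |(inner ℝ (b i) x : ℝ) * (inner ℝ (b i) y : ℝ)|) ∧
    ∑' i, |(inner ℝ (b i) x : ℝ) * (inner ℝ (b i) y : ℝ)| ≤ ‖x‖ * ‖y‖ := by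
  have h2x : Summable fun i => |(inner ℝ (b i) x : ℝ)| ^ 2 := by
    refine (b.orthonormal.inner_products_summable (x := x)).congr fun i => ?_
    rw [Real.norm_eq_abs]
  have h2y : Summable fun i => |(inner ℝ (b i) y : ℝ)| ^ 2 := by
    refine (b.orthonormal.inner_products_summable (x := y)).congr fun i => ?_
    rw [Real.norm_eq_abs]
  have hbx : ∑' i, |(inner ℝ (b i) x : ℝ)| ^ 2 ≤ ‖x‖ ^ 2 := by
    refine le_trans (le_of_eq (tsum_congr fun i => ?_))
      (b.orthonormal.tsum_inner_products_le x)
    rw [Real.norm_eq_abs]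
  have hby : ∑' i, |(inner ℝ (b i) y : ℝ)| ^ 2 ≤ ‖y‖ ^ 2 := by
    refine le_trans (le_of_eq (tsum_congr fun i => ?_))
      (b.orthonormal.tsum_inner_products_le y)
    rw [Real.norm_eq_abs]
  constructor
  · refine (cs_summable (fun i => abs_nonneg _) (fun i => abs_nonneg _) h2x h2y).congr
      fun i => ?_
    rw [abs_mul]
  · calc ∑' i, |(inner ℝ (b i) x : ℝ) * (inner ℝ (b i) y : ℝ)|
        = ∑' i, |(inner ℝ (b i) x : ℝ)| * |(inner ℝ (b i) y : ℝ)| := tsum_congr fun i => abs_mul _ _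
      _ ≤ ‖x‖ * ‖y‖ := cs_tsum_le (fun i => abs_nonneg _) (fun i => abs_nonneg _) h2x h2y
          (norm_nonneg x) (norm_nonneg y) hbx hby

lemma kernel_expansion (b : HilbertBasis ι ℝ H) (x y : H) :
    Summable (fun w : W ι => ca w * (psi b w x * psi b w y)) ∧
    Summable (fun w : W ι => ca w * (|psi b w x| * |psi b w y|)) ∧
    (∑' w : W ι, ca w * (psi b w x * psi b w y) = Real.exp (-‖x - y‖ ^ 2 / 2)) ∧
    (∑' w : W ι, ca w * (|psi b w x| * |psi b w y|) ≤ 1) := by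
  set gx := Real.exp (-‖x‖ ^ 2 / 2) with hgx
  set gy := Real.exp (-‖y‖ ^ 2 / 2) with hgy
  have hgx0 : 0 < gx := Real.exp_pos _
  have hgy0 : 0 < gy := Real.exp_pos _
  set c : ι → ℝ := fun i => (inner ℝ (b i) x : ℝ) * (inner ℝ (b i) y : ℝ) with hc
  obtain ⟨hcs, hcle⟩ := inner_abs_summable b x y
  obtain ⟨hs1, hs2, ht1, ht2⟩ := sig_exp hcs
  have hprod : ∀ w : W ι, psi b w x * psi b w y = (gx * gy) * ∏ j, c (w.2 j) := by
    intro w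
    unfold psi
    rw [← hgx, ← hgy]
    rw [show (∏ j, c (w.2 j)) = (∏ j, (inner ℝ (b (w.2 j)) x : ℝ)) * ∏ j, (inner ℝ (b (w.2 j)) y : ℝ)
      from by rw [← Finset.prod_mul_distrib]]
    ring
  have hprodabs : ∀ w : W ι, |psi b w x| * |psi b w y| = (gx * gy) * ∏ j, |c (w.2 j)| := by
    intro w
    rw [← abs_mul, hprod w, abs_mul, abs_of_pos (mul_pos hgx0 hgy0), Finset.abs_prod]
  have hinner : (∑' i, c i) = (inner ℝ x y : ℝ) := by
    rw [← b.tsum_inner_mul_inner x y]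
    exact tsum_congr fun i => by rw [hc, real_inner_comm (b i) x]
  have hsum1 : Summable (fun w : W ι => ca w * (psi b w x * psi b w y)) := by
    refine ((hs1.mul_left (gx * gy)).congr fun w => ?_)
    rw [hprod w]; ring
  have hsum2 : Summable (fun w : W ι => ca w * (|psi b w x| * |psi b w y|)) := by
    refine ((hs2.mul_left (gx * gy)).congr fun w => ?_)
    rw [hprodabs w]; ring
  refine ⟨hsum1, hsum2, ?_, ?_⟩
  · calc ∑' w : W ι, ca w * (psi b w x * psi b w y)
        = ∑' w : W ι, (gx * gy) * (ca w * ∏ j, c (w.2 j)) := by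
          refine tsum_congr fun w => ?_; rw [hprod w]; ring
      _ = (gx * gy) * ∑' w : W ι, ca w * ∏ j, c (w.2 j) := tsum_mul_left
      _ = (gx * gy) * Real.exp (inner ℝ x y : ℝ) := by rw [ht1, hinner]
      _ = Real.exp (-‖x - y‖ ^ 2 / 2) := by
          rw [hgx, hgy, ← Real.exp_add, ← Real.exp_add, norm_sub_sq_real]
          congr 1
          ring
  · calc ∑' w : W ι, ca w * (|psi b w x| * |psi b w y|)
        = ∑' w : W ι, (gx * gy) * (ca w * ∏ j, |c (w.2 j)|) := by
          refine tsum_congr fun w => ?_; rw [hprodabs w]; ring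
      _ = (gx * gy) * ∑' w : W ι, ca w * ∏ j, |c (w.2 j)| := tsum_mul_left
      _ = (gx * gy) * Real.exp (∑' i, |c i|) := by rw [ht2]
      _ ≤ (gx * gy) * Real.exp (‖x‖ * ‖y‖) := by
          refine mul_le_mul_of_nonneg_left (Real.exp_le_exp.mpr hcle) ?_
          positivity
      _ = Real.exp (-‖x‖ ^ 2 / 2 + -‖y‖ ^ 2 / 2 + ‖x‖ * ‖y‖) := by
          rw [hgx, hgy, ← Real.exp_add, ← Real.exp_add]
      _ ≤ 1 := by
          rw [show (1 : ℝ) = Real.exp 0 from (Real.exp_zero).symm]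
          refine Real.exp_le_exp.mpr ?_
          nlinarith [sq_nonneg (‖x‖ - ‖y‖)]


/-- helper: from real abs-sum bound to ENNReal tsum bound -/
lemma tsum_coe_le_ofReal {Wt : Type*} {f : Wt → ℝ} {C : ℝ}
    (hs : Summable fun w => |f w|) (hb : ∑' w, |f w| ≤ C) :
    ∑' w, (‖f w‖₊ : ℝ≥0∞) ≤ ENNReal.ofReal C := by
  have hsnn : Summable fun w => ‖f w‖₊ := by
    rw [← NNReal.summable_coe]
    refine hs.congr fun w => ?_
    rw [coe_nnnorm, Real.norm_eq_abs]
  rw [← ENNReal.coe_tsum hsnn]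
  rw [← ENNReal.ofReal_coe_nnreal]
  refine ENNReal.ofReal_le_ofReal ?_
  rw [NNReal.coe_tsum]
  refine le_trans (le_of_eq (tsum_congr fun w => ?_)) hb
  rw [coe_nnnorm, Real.norm_eq_abs]

section Meas
variable [MeasurableSpace H] [BorelSpace H] [Countable ι]

lemma psi_aesm (b : HilbertBasis ι ℝ H) (w : W ι) (μ : Measure H) :
    AEStronglyMeasurable (psi b w) μ :=
  (psi_continuous b w).aestronglyMeasurable

noncomputable def LL (b : HilbertBasis ι ℝ H) (μ : Measure H) (w : W ι) : ℝ≥0∞ :=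
  ∫⁻ z, ‖psi b w z‖₊ ∂μ

lemma meas_nn (b : HilbertBasis ι ℝ H) (w : W ι) :
    Measurable fun z => (‖psi b w z‖₊ : ℝ≥0∞) :=
  (psi_continuous b w).measurable.nnnorm.coe_nnreal_ennreal

/-- pointwise ENNReal bound -/
lemma ptwise_enn (b : HilbertBasis ι ℝ H) (x y : H) :
    ∑' w : W ι, (((ca w).toNNReal : ℝ≥0∞) * ‖psi b w x‖₊ * ‖psi b w y‖₊) ≤ 1 := by
  obtain ⟨_, hs2, _, hb2⟩ := kernel_expansion b x y
  have key : ∀ w : W ι, ((ca w).toNNReal : ℝ≥0∞) * ‖psi b w x‖₊ * ‖psi b w y‖₊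
      = (‖ca w * (psi b w x * psi b w y)‖₊ : ℝ≥0∞) := by
    intro w
    rw [nnnorm_mul, nnnorm_mul, ENNReal.coe_mul, ENNReal.coe_mul, ← mul_assoc]
    congr 1
    congr 1
    rw [Real.nnnorm_of_nonneg (ca_nonneg w), Real.toNNReal_of_nonneg (ca_nonneg w)]
  calc ∑' w : W ι, ((ca w).toNNReal : ℝ≥0∞) * ‖psi b w x‖₊ * ‖psi b w y‖₊
      = ∑' w : W ι, (‖ca w * (psi b w x * psi b w y)‖₊ : ℝ≥0∞) := tsum_congr key
    _ ≤ ENNReal.ofReal 1 := by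
        refine tsum_coe_le_ofReal ?_ ?_
        · refine hs2.congr fun w => ?_
          rw [abs_mul, abs_mul, abs_of_nonneg (ca_nonneg w)]
        · refine le_trans (le_of_eq (tsum_congr fun w => ?_)) hb2
          rw [abs_mul, abs_mul, abs_of_nonneg (ca_nonneg w)]
    _ = 1 := ENNReal.ofReal_one

/-- the master ENNReal sum bound -/
lemma master_bound (b : HilbertBasis ι ℝ H) (μa μb : Measure H)
    [IsFiniteMeasure μa] [IsFiniteMeasure μb] :
    ∑' w : W ι, ((ca w).toNNReal : ℝ≥0∞) * LL b μb w * LL b μa w ≤ μb Set.univ * μa Set.univ := by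
  have hterm : ∀ w : W ι, ((ca w).toNNReal : ℝ≥0∞) * LL b μb w * LL b μa w
      = ∫⁻ x, (((ca w).toNNReal : ℝ≥0∞) * LL b μb w) * ‖psi b w x‖₊ ∂μa := by
    intro w
    rw [lintegral_const_mul _ (meas_nn b w)]
    rfl
  have hG : ∀ (w : W ι) (x : H), (((ca w).toNNReal : ℝ≥0∞) * LL b μb w) * ‖psi b w x‖₊
      = ∫⁻ y, ((ca w).toNNReal : ℝ≥0∞) * ‖psi b w x‖₊ * ‖psi b w y‖₊ ∂μb := by
    intro w x
    rw [lintegral_const_mul _ (meas_nn b w)]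
    unfold LL
    ring
  calc ∑' w : W ι, ((ca w).toNNReal : ℝ≥0∞) * LL b μb w * LL b μa w
      = ∑' w : W ι, ∫⁻ x, (((ca w).toNNReal : ℝ≥0∞) * LL b μb w) * ‖psi b w x‖₊ ∂μa :=
        tsum_congr hterm
    _ = ∫⁻ x, ∑' w : W ι, (((ca w).toNNReal : ℝ≥0∞) * LL b μb w) * ‖psi b w x‖₊ ∂μa := by
        refine (lintegral_tsum fun w => ((meas_nn b w).const_mul _).aemeasurable).symm
    _ ≤ ∫⁻ _, (μb Set.univ) ∂μa := by
        refine lintegral_mono fun x => ?_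
        calc ∑' w : W ι, (((ca w).toNNReal : ℝ≥0∞) * LL b μb w) * ‖psi b w x‖₊
            = ∑' w : W ι, ∫⁻ y, ((ca w).toNNReal : ℝ≥0∞) * ‖psi b w x‖₊ * ‖psi b w y‖₊ ∂μb := by
              refine tsum_congr fun w => ?_
              rw [← hG w x]
          _ = ∫⁻ y, ∑' w : W ι, ((ca w).toNNReal : ℝ≥0∞) * ‖psi b w x‖₊ * ‖psi b w y‖₊ ∂μb := by
              refine (lintegral_tsum fun w => (((meas_nn b w).const_mul _)).aemeasurable).symm
          _ ≤ ∫⁻ _, 1 ∂μb := lintegral_mono fun y => ptwise_enn b x y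
          _ = μb Set.univ := by simp
    _ = μb Set.univ * μa Set.univ := by simp [mul_comm]


lemma master_ne_top (b : HilbertBasis ι ℝ H) (μa μb : Measure H)
    [IsFiniteMeasure μa] [IsFiniteMeasure μb] :
    ∑' w : W ι, ((ca w).toNNReal : ℝ≥0∞) * LL b μb w * LL b μa w ≠ ⊤ :=
  ne_top_of_le_ne_top (ENNReal.mul_ne_top (measure_ne_top μb _) (measure_ne_top μa _))
    (master_bound b μa μb)

lemma inner_integral_eq (b : HilbertBasis ι ℝ H) (μb : Measure H) [IsFiniteMeasure μb] (x : H) :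
    ∫ y, Real.exp (-‖x - y‖ ^ 2 / 2) ∂μb
      = ∑' w : W ι, (ca w * psi b w x) * (∫ z, psi b w z ∂μb) := by
  have hker : (fun y => Real.exp (-‖x - y‖ ^ 2 / 2))
      = fun y => ∑' w : W ι, (ca w * psi b w x) * psi b w y := by
    funext y
    rw [← (kernel_expansion b x y).2.2.1]
    exact tsum_congr fun w => by ring
  rw [hker]
  rw [integral_tsum (fun w => ((psi_continuous b w).aestronglyMeasurable).const_mul _) ?_]
  · exact tsum_congr fun w => integral_const_mul _ _
  · refine ne_top_of_le_ne_top (ENNReal.mul_ne_top (measure_ne_top μb Set.univ)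
      ENNReal.one_ne_top) ?_
    calc ∑' w : W ι, ∫⁻ y, (‖(ca w * psi b w x) * psi b w y‖₊ : ℝ≥0∞) ∂μb
        = ∑' w : W ι, ∫⁻ y, (‖ca w * psi b w x‖₊ : ℝ≥0∞) * ‖psi b w y‖₊ ∂μb := by
          refine tsum_congr fun w => lintegral_congr fun y => ?_
          rw [nnnorm_mul, ENNReal.coe_mul]
      _ = ∫⁻ y, ∑' w : W ι, (‖ca w * psi b w x‖₊ : ℝ≥0∞) * ‖psi b w y‖₊ ∂μb :=
          (lintegral_tsum (fun w => ((meas_nn b w).const_mul _).aemeasurable)).symm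
      _ ≤ ∫⁻ _, 1 ∂μb := by
          refine lintegral_mono fun y => ?_
          calc ∑' w : W ι, (‖ca w * psi b w x‖₊ : ℝ≥0∞) * ‖psi b w y‖₊
              = ∑' w : W ι, (‖ca w * (psi b w x * psi b w y)‖₊ : ℝ≥0∞) := by
                refine tsum_congr fun w => ?_
                rw [nnnorm_mul, nnnorm_mul, nnnorm_mul, ENNReal.coe_mul, ENNReal.coe_mul,
                  ENNReal.coe_mul, mul_assoc]
            _ ≤ ENNReal.ofReal 1 := by
                refine tsum_coe_le_ofReal
                  ((kernel_expansion b x y).2.1.congr fun w => by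
                    rw [abs_mul, abs_mul, abs_of_nonneg (ca_nonneg w)]) ?_
                refine le_trans (le_of_eq (tsum_congr fun w => by
                  rw [abs_mul, abs_mul, abs_of_nonneg (ca_nonneg w)]))
                  (kernel_expansion b x y).2.2.2
            _ = 1 := ENNReal.ofReal_one
      _ = μb Set.univ * 1 := by simp

lemma pair_eq (b : HilbertBasis ι ℝ H) (μa μb : Measure H)
    [IsFiniteMeasure μa] [IsFiniteMeasure μb] :
    (∫ x, ∫ y, Real.exp (-‖x - y‖ ^ 2 / 2) ∂μb ∂μa)
      = ∑' w : W ι, ca w * ((∫ z, psi b w z ∂μb) * (∫ z, psi b w z ∂μa)) := by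
  have hJb : ∀ w : W ι, (‖∫ z, psi b w z ∂μb‖₊ : ℝ≥0∞) ≤ LL b μb w := fun w =>
    enorm_integral_le_lintegral_enorm _
  have hJa : ∀ w : W ι, (‖∫ z, psi b w z ∂μa‖₊ : ℝ≥0∞) ≤ LL b μa w := fun w =>
    enorm_integral_le_lintegral_enorm _
  have h1 : (fun x => ∫ y, Real.exp (-‖x - y‖ ^ 2 / 2) ∂μb)
      = fun x => ∑' w : W ι, (ca w * (∫ z, psi b w z ∂μb)) * psi b w x := by
    funext x
    rw [inner_integral_eq b μb x]
    exact tsum_congr fun w => by ring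
  rw [h1]
  rw [integral_tsum (fun w => ((psi_continuous b w).aestronglyMeasurable).const_mul _) ?_]
  · refine tsum_congr fun w => ?_
    rw [integral_const_mul]
    ring
  · -- ∑' w, ∫⁻ ‖(ca w * Jb w) * psi w x‖₊ ∂μa ≠ ⊤
    refine ne_top_of_le_ne_top (master_ne_top b μa μb) ?_
    refine Summable.tsum_le_tsum (fun w => ?_) ENNReal.summable ENNReal.summable
    calc ∫⁻ x, (‖(ca w * (∫ z, psi b w z ∂μb)) * psi b w x‖₊ : ℝ≥0∞) ∂μa
        = ∫⁻ x, (‖ca w * (∫ z, psi b w z ∂μb)‖₊ : ℝ≥0∞) * ‖psi b w x‖₊ ∂μa := by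
          refine lintegral_congr fun x => ?_
          rw [nnnorm_mul, ENNReal.coe_mul]
      _ = (‖ca w * (∫ z, psi b w z ∂μb)‖₊ : ℝ≥0∞) * LL b μa w :=
          lintegral_const_mul _ (meas_nn b w)
      _ ≤ (((ca w).toNNReal : ℝ≥0∞) * LL b μb w) * LL b μa w := by
          refine mul_le_mul_left ?_ _
          rw [nnnorm_mul, ENNReal.coe_mul, Real.nnnorm_of_nonneg (ca_nonneg w),
            Real.toNNReal_of_nonneg (ca_nonneg w)]
          exact mul_le_mul_right (hJb w) _
      _ = ((ca w).toNNReal : ℝ≥0∞) * LL b μb w * LL b μa w := rfl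

lemma pair_summable (b : HilbertBasis ι ℝ H) (μa μb : Measure H)
    [IsFiniteMeasure μa] [IsFiniteMeasure μb] :
    Summable (fun w : W ι => ca w * ((∫ z, psi b w z ∂μb) * (∫ z, psi b w z ∂μa))) := by
  have hne : ∀ w : W ι, ((ca w).toNNReal : ℝ≥0∞) * LL b μb w * LL b μa w ≠ ⊤ := fun w =>
    ne_top_of_le_ne_top (master_ne_top b μa μb) (ENNReal.le_tsum w)
  have husum : Summable (fun w : W ι =>
      (((ca w).toNNReal : ℝ≥0∞) * LL b μb w * LL b μa w).toReal) :=
    ENNReal.summable_toReal (master_ne_top b μa μb)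
  rw [← summable_abs_iff]
  refine Summable.of_nonneg_of_le (fun w => abs_nonneg _) (fun w => ?_) husum
  have hle : ENNReal.ofReal |ca w * ((∫ z, psi b w z ∂μb) * (∫ z, psi b w z ∂μa))|
      ≤ ((ca w).toNNReal : ℝ≥0∞) * LL b μb w * LL b μa w := by
    rw [← Real.enorm_eq_ofReal_abs]
    calc (‖ca w * ((∫ z, psi b w z ∂μb) * (∫ z, psi b w z ∂μa))‖₊ : ℝ≥0∞)
        = (‖ca w‖₊ : ℝ≥0∞) * ‖∫ z, psi b w z ∂μb‖₊ * ‖∫ z, psi b w z ∂μa‖₊ := by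
          rw [nnnorm_mul, nnnorm_mul, ENNReal.coe_mul, ENNReal.coe_mul, mul_assoc]
      _ ≤ ((ca w).toNNReal : ℝ≥0∞) * LL b μb w * LL b μa w := by
          rw [Real.nnnorm_of_nonneg (ca_nonneg w), Real.toNNReal_of_nonneg (ca_nonneg w)]
          exact mul_le_mul' (mul_le_mul' le_rfl (enorm_integral_le_lintegral_enorm _))
            (enorm_integral_le_lintegral_enorm _)
  calc |ca w * ((∫ z, psi b w z ∂μb) * (∫ z, psi b w z ∂μa))|
      = (ENNReal.ofReal |ca w * ((∫ z, psi b w z ∂μb) * (∫ z, psi b w z ∂μa))|).toReal := by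
        rw [ENNReal.toReal_ofReal (abs_nonneg _)]
    _ ≤ (((ca w).toNNReal : ℝ≥0∞) * LL b μb w * LL b μa w).toReal :=
        ENNReal.toReal_mono (hne w) hle


end Meas

/-- countable Hilbert basis of a separable Hilbert space -/
lemma countable_basis_index {H : Type*} [NormedAddCommGroup H] [InnerProductSpace ℝ H]
    [CompleteSpace H] [TopologicalSpace.SeparableSpace H] :
    ∃ (s : Set H), Countable s ∧ Nonempty (HilbertBasis s ℝ H) := by
  obtain ⟨s, b, hb⟩ := exists_hilbertBasis ℝ H
  refine ⟨s, ?_, ⟨b⟩⟩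
  have horth : Orthonormal ℝ ((↑) : s → H) := by
    rw [← hb]; exact b.orthonormal
  have hdist : ∀ i j : s, i ≠ j → (1 : ℝ) ≤ dist (i : H) (j : H) := by
    intro i j hij
    have h2 : ‖(i : H) - (j : H)‖ ^ 2 = 2 := by
      rw [norm_sub_sq_real, horth.1 i, horth.1 j]
      rw [horth.2 hij]
      norm_num
    rw [dist_eq_norm]
    nlinarith [norm_nonneg ((i : H) - (j : H))]
  have : Countable s := by
    refine Pairwise.countable_of_isOpen_disjoint (s := fun i : s => Metric.ball (i : H) (1/2))
      ?_ (fun i => Metric.isOpen_ball) (fun i => Metric.nonempty_ball.mpr (by norm_num))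
    intro i j hij
    refine Metric.ball_disjoint_ball ?_
    rw [show (1:ℝ)/2 + 1/2 = 1 by norm_num]
    exact hdist i j hij
  exact this

end Stmt2Aux

open Stmt2Aux in
theorem stmt2 {H : Type*} [NormedAddCommGroup H] [InnerProductSpace ℝ H]
    [CompleteSpace H] [TopologicalSpace.SeparableSpace H]
    [MeasurableSpace H] [BorelSpace H]
    (μp μm : Measure H) [IsFiniteMeasure μp] [IsFiniteMeasure μm] :
    0 ≤ (∫ x, ∫ y, Real.exp (-‖x - y‖ ^ 2 / 2) ∂μp ∂μp)
        + (∫ x, ∫ y, Real.exp (-‖x - y‖ ^ 2 / 2) ∂μm ∂μm)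
        - 2 * (∫ x, ∫ y, Real.exp (-‖x - y‖ ^ 2 / 2) ∂μm ∂μp) := by
  obtain ⟨s, hcnt, ⟨b⟩⟩ := countable_basis_index (H := H)
  haveI : Countable s := hcnt
  set P : W s → ℝ := fun w => ∫ z, psi b w z ∂μp with hP
  set M : W s → ℝ := fun w => ∫ z, psi b w z ∂μm with hM
  have e1 : (∫ x, ∫ y, Real.exp (-‖x - y‖ ^ 2 / 2) ∂μp ∂μp)
      = ∑' w : W s, ca w * (P w * P w) := pair_eq b μp μp
  have e2 : (∫ x, ∫ y, Real.exp (-‖x - y‖ ^ 2 / 2) ∂μm ∂μm)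
      = ∑' w : W s, ca w * (M w * M w) := pair_eq b μm μm
  have e3 : (∫ x, ∫ y, Real.exp (-‖x - y‖ ^ 2 / 2) ∂μm ∂μp)
      = ∑' w : W s, ca w * (M w * P w) := pair_eq b μp μm
  have s1 : Summable (fun w : W s => ca w * (P w * P w)) := pair_summable b μp μp
  have s2 : Summable (fun w : W s => ca w * (M w * M w)) := pair_summable b μm μm
  have s3 : Summable (fun w : W s => ca w * (M w * P w)) := pair_summable b μp μm
  rw [e1, e2, e3]
  have hcomb : (∑' w : W s, ca w * (P w * P w)) + (∑' w : W s, ca w * (M w * M w))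
      - 2 * (∑' w : W s, ca w * (M w * P w))
      = ∑' w : W s, (ca w * (P w * P w) + ca w * (M w * M w) - 2 * (ca w * (M w * P w))) := by
    rw [← Summable.tsum_add s1 s2, ← tsum_mul_left, ← Summable.tsum_sub (s1.add s2) ((s3).mul_left 2)]
  rw [hcomb]
  refine tsum_nonneg fun w => ?_
  have : ca w * (P w * P w) + ca w * (M w * M w) - 2 * (ca w * (M w * P w))
      = ca w * (P w - M w) ^ 2 := by ring
  rw [this]
  exact mul_nonneg (ca_nonneg w) (sq_nonneg _)
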